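/- Deterministic core of leverage score approximation via undersampling: let A be a real n×d matrix with rows a_1,…,a_n, let u ∈ ℝⁿ with u_i ≥ 0 for all i, and let α ∈ (0,1]. Let S and W be n×n nonnegative diagonal matrices such that: (i) Aᵀ S² A ⪯ Aᵀ A; (ii) 0 ≤ W_{jj} ≤ 1 for all j; (iii) τ_i(WA) ≤ α·u_i for all i; (iv) ∑_{i : W_{ii} ≠ 1} u_i ≤ d/α; and (v) (α/2)·Aᵀ W² A ⪯ Aᵀ W S² W A. Then, taking each min in the extended nonnegative reals (so min{∞, u_i} = u_i), ∑_{i=1}^n min{ τ_i^{SA}(A), u_i } ≤ 3d/α. -/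

import Mathlib

open Matrix
open scoped ENNReal Classical

/-- The leverage score of row `i` of `M`:
`τᵢ(M) = inf {‖x‖₂² : Mᵀx = mᵢ}` (the set is nonempty since `x = eᵢ` works). -/
noncomputable def lev {n d : ℕ} (M : Matrix (Fin n) (Fin d) ℝ) (i : Fin n) : ℝ :=
  sInf {t : ℝ | ∃ x : Fin n → ℝ, Mᵀ *ᵥ x = M i ∧ t = ∑ j, (x j) ^ 2}

/-- The generalized leverage score of a row `a` with respect to `B`:
`τ^B(a) = inf {‖x‖₂² : Bᵀx = a} ∈ [0,∞]`, with `inf ∅ = ∞`. -/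
noncomputable def glev {k d : ℕ} (B : Matrix (Fin k) (Fin d) ℝ) (a : Fin d → ℝ) : ℝ≥0∞ :=
  sInf {t : ℝ≥0∞ | ∃ x : Fin k → ℝ, Bᵀ *ᵥ x = a ∧ t = ENNReal.ofReal (∑ j, (x j) ^ 2)}

lemma star_eq_transpose_real {d : ℕ} (M : Matrix (Fin d) (Fin d) ℝ) : star M = Mᵀ := by
  rw [Matrix.star_eq_conjTranspose, conjTranspose_eq_transpose_of_trivial]

lemma isHermitian_transpose_mul_self {m k : ℕ} (A : Matrix (Fin m) (Fin k) ℝ) :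
    (Aᵀ * A).IsHermitian := by
  have h := isHermitian_conjTranspose_mul_self A
  rwa [conjTranspose_eq_transpose_of_trivial] at h

lemma exists_pinv {d : ℕ} (C : Matrix (Fin d) (Fin d) ℝ) (hC : C.IsHermitian) :
    ∃ G : Matrix (Fin d) (Fin d) ℝ, Gᵀ = G ∧ C * G = G * C ∧ C * G * C = C ∧
      G * C * G = G ∧ (C * G).trace ≤ (d : ℝ) := by
  classical
  set U : Matrix (Fin d) (Fin d) ℝ := (hC.eigenvectorUnitary : Matrix (Fin d) (Fin d) ℝ) with hU
  have hUU : Uᵀ * U = 1 := by rw [← star_eq_transpose_real]; exact Unitary.coe_star_mul_self _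
  set lam : Fin d → ℝ := hC.eigenvalues with hlam
  set g : Fin d → ℝ := fun i => if lam i = 0 then 0 else (lam i)⁻¹ with hg
  have hspec : C = U * diagonal lam * Uᵀ := by
    have := hC.spectral_theorem
    rw [Unitary.conjStarAlgAut_apply, star_eq_transpose_real] at this
    simpa using this
  have key : ∀ f h : Fin d → ℝ, (U * diagonal f * Uᵀ) * (U * diagonal h * Uᵀ)
      = U * diagonal (fun i => f i * h i) * Uᵀ := by
    intro f h
    calc (U * diagonal f * Uᵀ) * (U * diagonal h * Uᵀ)
        = U * (diagonal f * ((Uᵀ * U) * diagonal h)) * Uᵀ := by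
          simp only [mul_assoc]
      _ = U * diagonal (fun i => f i * h i) * Uᵀ := by
          rw [hUU, one_mul, diagonal_mul_diagonal]
  refine ⟨U * diagonal g * Uᵀ, ?_, ?_, ?_, ?_, ?_⟩
  · simp [transpose_mul, diagonal_transpose, mul_assoc]
  · rw [hspec, key, key]
    have : (fun i => lam i * g i) = fun i => g i * lam i := by funext i; ring
    rw [this]
  · rw [hspec, key, key]
    have : (fun i => lam i * g i * lam i) = lam := by
      funext i; by_cases h : lam i = 0 <;> simp [hg, h]
    rw [this]
  · rw [hspec, key, key]
    have : (fun i => g i * lam i * g i) = g := by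
      funext i; by_cases h : lam i = 0 <;> simp [hg, h]
    rw [this]
  · rw [hspec, key]
    have : (U * diagonal (fun i => lam i * g i) * Uᵀ).trace
        = (diagonal (fun i => lam i * g i)).trace := by
      rw [mul_assoc, trace_mul_comm, mul_assoc, hUU, mul_one]
    rw [this, trace_diagonal]
    calc (∑ i, lam i * g i) ≤ ∑ _i : Fin d, (1:ℝ) := by
          apply Finset.sum_le_sum
          intro i _
          by_cases h : lam i = 0 <;> simp [hg, h]
      _ = d := by simp

lemma dot_tmv {n d : ℕ} (A : Matrix (Fin n) (Fin d) ℝ) (v : Fin d → ℝ) (w : Fin n → ℝ) :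
    v ⬝ᵥ (Aᵀ *ᵥ w) = (A *ᵥ v) ⬝ᵥ w := by
  rw [dotProduct_mulVec, vecMul_transpose]

lemma zero_of_tmul_self {n d : ℕ} (N : Matrix (Fin n) (Fin d) ℝ) (h : Nᵀ * N = 0) : N = 0 := by
  ext i k
  have hk : (Nᵀ * N) k k = 0 := by rw [h]; rfl
  have hsum : ∑ j, N j k ^ 2 = 0 := by
    rw [← hk]; simp [mul_apply, pow_two]
  have := (Finset.sum_eq_zero_iff_of_nonneg (fun j _ => sq_nonneg (N j k))).1 hsum i (by simp)
  simpa using pow_eq_zero_iff (n := 2) (by norm_num) |>.1 this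

lemma lev_le {n d : ℕ} {M : Matrix (Fin n) (Fin d) ℝ} {i : Fin n} {x : Fin n → ℝ}
    (hx : Mᵀ *ᵥ x = M i) : lev M i ≤ ∑ j, (x j) ^ 2 := by
  apply csInf_le
  · exact ⟨0, by rintro t ⟨y, -, rfl⟩; positivity⟩
  · exact ⟨x, hx, rfl⟩

lemma lev_set_nonempty {n d : ℕ} (M : Matrix (Fin n) (Fin d) ℝ) (i : Fin n) :
    {t : ℝ | ∃ x : Fin n → ℝ, Mᵀ *ᵥ x = M i ∧ t = ∑ j, (x j) ^ 2}.Nonempty := by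
  refine ⟨∑ j, ((Pi.single i 1 : Fin n → ℝ) j) ^ 2, Pi.single i 1, ?_, rfl⟩
  funext j
  simp [mulVec_single]

lemma le_lev {n d : ℕ} {M : Matrix (Fin n) (Fin d) ℝ} {i : Fin n} {c : ℝ}
    (h : ∀ x : Fin n → ℝ, Mᵀ *ᵥ x = M i → c ≤ ∑ j, (x j) ^ 2) : c ≤ lev M i := by
  apply le_csInf (lev_set_nonempty M i)
  rintro t ⟨x, hx, rfl⟩
  exact h x hx

lemma lev_nonneg {n d : ℕ} (M : Matrix (Fin n) (Fin d) ℝ) (i : Fin n) : 0 ≤ lev M i :=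
  le_lev (fun x _ => by positivity)

lemma quadB {n d : ℕ} (B : Matrix (Fin n) (Fin d) ℝ) (v : Fin d → ℝ) :
    v ⬝ᵥ ((Bᵀ * B) *ᵥ v) = ∑ j, ((B *ᵥ v) j) ^ 2 := by
  rw [← mulVec_mulVec, dot_tmv]
  simp [dotProduct, pow_two]

lemma quadD {n d : ℕ} (A : Matrix (Fin n) (Fin d) ℝ) (f : Fin n → ℝ) (v : Fin d → ℝ) :
    v ⬝ᵥ ((Aᵀ * diagonal f * A) *ᵥ v) = ∑ j, f j * ((A *ᵥ v) j) ^ 2 := by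
  have h1 : (Aᵀ * diagonal f * A) *ᵥ v = Aᵀ *ᵥ (diagonal f *ᵥ (A *ᵥ v)) := by
    rw [mulVec_mulVec, mulVec_mulVec]
  rw [h1, dot_tmv]
  simp only [dotProduct, mulVec_diagonal]
  exact Finset.sum_congr rfl (fun j _ => by ring)

lemma psd_quad {d : ℕ} {X : Matrix (Fin d) (Fin d) ℝ} (h : X.PosSemidef) (v : Fin d → ℝ) :
    0 ≤ v ⬝ᵥ (X *ᵥ v) := by
  have := h.dotProduct_mulVec_nonneg v
  simpa using this

/-- Sum of leverage scores is at most the number of columns. -/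
lemma sum_lev_le {n d : ℕ} (M : Matrix (Fin n) (Fin d) ℝ) : ∑ i, lev M i ≤ (d : ℝ) := by
  classical
  obtain ⟨G, hGt, hcomm, hCGC, hGCG, htr⟩ :=
    exists_pinv (Mᵀ * M) (isHermitian_transpose_mul_self M)
  set C : Matrix (Fin d) (Fin d) ℝ := Mᵀ * M with hCdef
  have hCt : Cᵀ = C := by
    have h := isHermitian_transpose_mul_self M
    rw [Matrix.IsHermitian, conjTranspose_eq_transpose_of_trivial] at h
    exact h
  have hCQ : C * (1 - G * C) = 0 := by
    rw [mul_sub, mul_one, ← mul_assoc, hCGC, sub_self]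
  have hMQ : M * (1 - G * C) = 0 := by
    apply zero_of_tmul_self
    calc (M * (1 - G * C))ᵀ * (M * (1 - G * C))
        = (1 - G * C)ᵀ * ((Mᵀ * M) * (1 - G * C)) := by
          rw [transpose_mul]; simp only [Matrix.mul_assoc]
      _ = (1 - G * C)ᵀ * (C * (1 - G * C)) := by rw [← hCdef]
      _ = 0 := by rw [hCQ, mul_zero]
  have hMGC : M * (G * C) = M := by
    have := hMQ
    rw [Matrix.mul_sub, Matrix.mul_one, sub_eq_zero] at this
    exact this.symm
  have hCGMt : C * (G * Mᵀ) = Mᵀ := by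
    have h1 : (G * C)ᵀ * Mᵀ = Mᵀ := by rw [← transpose_mul, hMGC]
    rw [transpose_mul, hCt, hGt] at h1
    rw [← Matrix.mul_assoc]; exact h1
  have hlev : ∀ i, lev M i ≤ (M i) ⬝ᵥ (G *ᵥ (M i)) := by
    intro i
    have hMi : Mᵀ *ᵥ (Pi.single i 1) = M i := by
      funext j; simp [mulVec_single]
    have hfeas : Mᵀ *ᵥ (M *ᵥ (G *ᵥ (M i))) = M i := by
      rw [mulVec_mulVec, mulVec_mulVec, ← hMi, mulVec_mulVec]
      have e0 : Mᵀ * M * G * Mᵀ = Mᵀ := by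
        calc Mᵀ * M * G * Mᵀ = C * (G * Mᵀ) := by rw [← hCdef, Matrix.mul_assoc]
          _ = Mᵀ := hCGMt
      rw [e0]
    have hval : ∑ j, ((M *ᵥ (G *ᵥ (M i))) j) ^ 2 = (M i) ⬝ᵥ (G *ᵥ (M i)) := by
      rw [← quadB, ← hCdef]
      have e2 : G *ᵥ (C *ᵥ (G *ᵥ (M i))) = G *ᵥ (M i) := by
        rw [mulVec_mulVec, mulVec_mulVec, hGCG]
      calc (G *ᵥ (M i)) ⬝ᵥ (C *ᵥ (G *ᵥ (M i)))
          = (M i) ⬝ᵥ (Gᵀ *ᵥ (C *ᵥ (G *ᵥ (M i)))) := (dot_tmv G (M i) _).symm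
        _ = (M i) ⬝ᵥ (G *ᵥ (M i)) := by rw [hGt, e2]
    calc lev M i ≤ ∑ j, ((M *ᵥ (G *ᵥ (M i))) j) ^ 2 := lev_le hfeas
      _ = (M i) ⬝ᵥ (G *ᵥ (M i)) := hval
  have hsum : ∑ i, (M i) ⬝ᵥ (G *ᵥ (M i)) = (M * (G * Mᵀ)).trace := by
    rw [trace]
    apply Finset.sum_congr rfl
    intro i _
    simp only [diag_apply, mul_apply, mulVec, dotProduct, transpose_apply]
  have htr2 : (M * (G * Mᵀ)).trace ≤ (d : ℝ) := by
    rw [trace_mul_comm, Matrix.mul_assoc, ← hCdef, trace_mul_comm]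
    exact htr
  calc ∑ i, lev M i ≤ ∑ i, (M i) ⬝ᵥ (G *ᵥ (M i)) := Finset.sum_le_sum (fun i _ => hlev i)
    _ = (M * (G * Mᵀ)).trace := hsum
    _ ≤ (d : ℝ) := htr2

set_option maxHeartbeats 1000000 in
/-- deterministic core of leverage score approximation via undersampling:
if (i) `AᵀS²A ⪯ AᵀA`, (ii) `0 ≤ Wⱼⱼ ≤ 1`, (iii) `τᵢ(WA) ≤ α·uᵢ`,
(iv) `∑_{i : Wᵢᵢ ≠ 1} uᵢ ≤ d/α`, and (v) `(α/2)·AᵀW²A ⪯ AᵀWS²WA`, then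
`∑ᵢ min{τᵢ^{SA}(A), uᵢ} ≤ 3d/α` (mins taken in `[0,∞]`). -/
theorem stmt15 {n d : ℕ} (A : Matrix (Fin n) (Fin d) ℝ)
    (u : Fin n → ℝ) (hu : ∀ i, 0 ≤ u i) (α : ℝ) (hα0 : 0 < α) (hα1 : α ≤ 1)
    (s w : Fin n → ℝ) (hs : ∀ j, 0 ≤ s j)
    (hi : (Aᵀ * A - Aᵀ * Matrix.diagonal (fun j => (s j) ^ 2) * A).PosSemidef)
    (hii : ∀ j, 0 ≤ w j ∧ w j ≤ 1)
    (hiii : ∀ i, lev (Matrix.diagonal w * A) i ≤ α * u i)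
    (hiv : (∑ i ∈ Finset.univ.filter (fun i => w i ≠ 1), u i) ≤ (d : ℝ) / α)
    (hv : (Aᵀ * Matrix.diagonal (fun j => (w j * s j) ^ 2) * A -
        (α / 2) • (Aᵀ * Matrix.diagonal (fun j => (w j) ^ 2) * A)).PosSemidef) :
    ∑ i : Fin n, min (glev (Matrix.diagonal s * A) (A i)) (ENNReal.ofReal (u i)) ≤
      ENNReal.ofReal (3 * (d : ℝ) / α) := by
  classical
  set M : Matrix (Fin n) (Fin d) ℝ := Matrix.diagonal w * A with hM
  set SA : Matrix (Fin n) (Fin d) ℝ := Matrix.diagonal s * A with hSA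
  set C : Matrix (Fin d) (Fin d) ℝ := SAᵀ * SA with hCdef
  have hCt : Cᵀ = C := by
    have h := isHermitian_transpose_mul_self SA
    rw [Matrix.IsHermitian, conjTranspose_eq_transpose_of_trivial] at h
    exact h
  obtain ⟨G, hGt, hcomm, hCGC, hGCG, htr⟩ := exists_pinv C (isHermitian_transpose_mul_self SA)
  clear_value M SA C
  -- quadratic form of C
  have hCq : ∀ v : Fin d → ℝ, v ⬝ᵥ (C *ᵥ v) = ∑ j, (s j)^2 * ((A *ᵥ v) j)^2 := by
    intro v
    rw [hCdef, quadB]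
    apply Finset.sum_congr rfl
    intro j _
    have h1 : (SA *ᵥ v) j = s j * (A *ᵥ v) j := by
      rw [hSA, ← mulVec_mulVec, mulVec_diagonal]
    rw [h1]; ring
  -- key quadratic inequality from (v) and w ≤ 1
  have hkey : ∀ v : Fin d → ℝ, (α/2) * (∑ j, (w j)^2 * ((A *ᵥ v) j)^2) ≤ v ⬝ᵥ (C *ᵥ v) := by
    intro v
    have h0 := psd_quad hv v
    rw [Matrix.sub_mulVec, dotProduct_sub, Matrix.smul_mulVec, dotProduct_smul,
      quadD, quadD, smul_eq_mul, sub_nonneg] at h0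
    have h1 : (∑ j, (w j * s j)^2 * ((A *ᵥ v) j)^2) ≤ ∑ j, (s j)^2 * ((A *ᵥ v) j)^2 := by
      apply Finset.sum_le_sum
      intro j _
      have hw1 : (w j)^2 ≤ 1 := by nlinarith [(hii j).1, (hii j).2]
      have hw2 : (w j * s j)^2 ≤ (s j)^2 := by nlinarith [sq_nonneg (s j)]
      nlinarith [sq_nonneg ((A *ᵥ v) j)]
    rw [hCq v]
    linarith
  have hCQ : C * (1 - G * C) = 0 := by
    rw [mul_sub, mul_one, ← mul_assoc, hCGC, sub_self]
  have hMQ : M * (1 - G * C) = 0 := by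
    have hcol : ∀ v : Fin d → ℝ, (M * (1 - G * C)) *ᵥ v = 0 := by
      intro v
      set v' : Fin d → ℝ := (1 - G * C) *ᵥ v with hv'
      have hCv' : C *ᵥ v' = 0 := by
        rw [hv', mulVec_mulVec, hCQ, zero_mulVec]
      have h0 : v' ⬝ᵥ (C *ᵥ v') = 0 := by rw [hCv', dotProduct_zero]
      have h1 := hkey v'
      rw [h0] at h1
      have hnn : 0 ≤ ∑ j, (w j)^2 * ((A *ᵥ v') j)^2 :=
        Finset.sum_nonneg (fun j _ => mul_nonneg (sq_nonneg _) (sq_nonneg _))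
      have h2 : ∑ j, (w j)^2 * ((A *ᵥ v') j)^2 = 0 := by nlinarith
      have h3 : ∀ j, w j * (A *ᵥ v') j = 0 := by
        intro j
        have h4 := (Finset.sum_eq_zero_iff_of_nonneg
          (fun j _ => mul_nonneg (sq_nonneg (w j)) (sq_nonneg ((A *ᵥ v') j)))).1 h2 j (by simp)
        have h5 : (w j * (A *ᵥ v') j)^2 = 0 := by rw [mul_pow]; exact h4
        exact pow_eq_zero_iff (by norm_num) |>.1 h5
      rw [← mulVec_mulVec, ← hv']
      funext j
      have h6 : (M *ᵥ v') j = w j * (A *ᵥ v') j := by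
        rw [hM, ← mulVec_mulVec, mulVec_diagonal]
      rw [h6, h3 j]
      rfl
    ext i k
    have h7 := congrFun (hcol (Pi.single k 1)) i
    simpa [mulVec_single] using h7
  have hMGC : M * (G * C) = M := by
    have h := hMQ
    rw [Matrix.mul_sub, Matrix.mul_one, sub_eq_zero] at h
    exact h.symm
  have hCGMt : C * (G * Mᵀ) = Mᵀ := by
    have h1 : (G * C)ᵀ * Mᵀ = Mᵀ := by rw [← transpose_mul, hMGC]
    rw [transpose_mul, hCt, hGt] at h1
    rw [← Matrix.mul_assoc]
    exact h1
  -- per-row bound for rows with w i = 1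
  have hrow : ∀ i : Fin n, w i = 1 →
      glev SA (A i) ≤ ENNReal.ofReal ((2/α) * lev M i) := by
    intro i hwi
    have hMi : M i = A i := by
      funext j
      rw [hM]
      simp [diagonal_mul, hwi]
    have hai : Mᵀ *ᵥ Pi.single i 1 = A i := by
      rw [← hMi]
      funext j
      simp [mulVec_single]
    have hCGa : C *ᵥ (G *ᵥ (A i)) = A i := by
      conv_lhs => rw [← hai]
      rw [mulVec_mulVec, mulVec_mulVec, Matrix.mul_assoc, hCGMt, hai]
    set z : Fin d → ℝ := G *ᵥ (A i) with hz
    have hzC : z ⬝ᵥ (C *ᵥ z) = (A i) ⬝ᵥ z := by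
      rw [hCGa, dotProduct_comm]
    set t : ℝ := (A i) ⬝ᵥ z with ht
    clear_value z t
    have hyt : ∑ j, ((SA *ᵥ z) j)^2 = t := by
      rw [← quadB, ← hCdef, hzC]
    have ht0 : 0 ≤ t := by rw [← hyt]; positivity
    have hglev : glev SA (A i) ≤ ENNReal.ofReal t := by
      apply sInf_le
      refine ⟨SA *ᵥ z, ?_, by rw [hyt]⟩
      rw [mulVec_mulVec, ← hCdef]
      exact hCGa
    have hb : (α/2) * t ≤ lev M i := by
      apply le_lev
      intro x hx
      rw [hMi] at hx
      have hdot : t = (M *ᵥ z) ⬝ᵥ x := by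
        rw [ht, dotProduct_comm, ← hx, dot_tmv]
      have hMz : ∑ j, ((M *ᵥ z) j)^2 = ∑ j, (w j)^2 * ((A *ᵥ z) j)^2 := by
        apply Finset.sum_congr rfl
        intro j _
        have h8 : (M *ᵥ z) j = w j * (A *ᵥ z) j := by
          rw [hM, ← mulVec_mulVec, mulVec_diagonal]
        rw [h8]; ring
      have hkz := hkey z
      rw [hzC] at hkz
      have hS : ∑ j, ((M *ᵥ z) j)^2 ≤ (2/α) * t := by
        rw [hMz]
        rw [div_mul_eq_mul_div, le_div_iff₀ hα0]
        linarith
      have hxnn : (0:ℝ) ≤ ∑ j, (x j)^2 := by positivity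
      have hCS : t^2 ≤ (∑ j, ((M *ᵥ z) j)^2) * (∑ j, (x j)^2) := by
        have hd : (M *ᵥ z) ⬝ᵥ x = ∑ j, (M *ᵥ z) j * x j := rfl
        rw [hdot, hd]
        exact Finset.sum_mul_sq_le_sq_mul_sq Finset.univ (M *ᵥ z) x
      by_cases htz : t = 0
      · rw [htz, mul_zero]; positivity
      · have htpos : 0 < t := lt_of_le_of_ne ht0 (Ne.symm htz)
        have h6 : t^2 ≤ (2/α) * t * (∑ j, (x j)^2) :=
          le_trans hCS (mul_le_mul_of_nonneg_right hS hxnn)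
        have h7 : α * t^2 ≤ 2 * t * (∑ j, (x j)^2) := by
          have h9 := mul_le_mul_of_nonneg_left h6 hα0.le
          calc α * t^2 ≤ α * ((2/α) * t * (∑ j, (x j)^2)) := h9
            _ = 2 * t * (∑ j, (x j)^2) := by field_simp
        have h10 : (α/2 * t) * t ≤ (∑ j, (x j)^2) * t := by nlinarith
        exact le_of_mul_le_mul_right h10 htpos
    have hlev2 : t ≤ (2/α) * lev M i := by
      have h11 : t = (2/α) * ((α/2) * t) := by field_simp
      rw [h11]
      exact mul_le_mul_of_nonneg_left hb (by positivity)
    exact le_trans hglev (ENNReal.ofReal_le_ofReal hlev2)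
  -- assemble
  have hmin : ∀ i : Fin n, min (glev SA (A i)) (ENNReal.ofReal (u i)) ≤
      (if w i = 1 then ENNReal.ofReal ((2/α) * lev M i) else ENNReal.ofReal (u i)) := by
    intro i
    by_cases hwi : w i = 1
    · rw [if_pos hwi]; exact le_trans (min_le_left _ _) (hrow i hwi)
    · rw [if_neg hwi]; exact min_le_right _ _
  have part1 : ∑ i ∈ Finset.univ.filter (fun i => w i = 1),
      ENNReal.ofReal ((2/α) * lev M i) ≤ ENNReal.ofReal (2 * (d : ℝ) / α) := by
    rw [← ENNReal.ofReal_sum_of_nonneg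
      (fun i _ => mul_nonneg (by positivity) (lev_nonneg M i))]
    apply ENNReal.ofReal_le_ofReal
    rw [← Finset.mul_sum]
    have hsub : ∑ i ∈ Finset.univ.filter (fun i => w i = 1), lev M i ≤ ∑ i, lev M i :=
      Finset.sum_le_sum_of_subset_of_nonneg (Finset.filter_subset _ _)
        (fun i _ _ => lev_nonneg M i)
    have h12 : ∑ i ∈ Finset.univ.filter (fun i => w i = 1), lev M i ≤ (d : ℝ) :=
      le_trans hsub (sum_lev_le M)
    calc (2/α) * ∑ i ∈ Finset.univ.filter (fun i => w i = 1), lev M i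
        ≤ (2/α) * (d : ℝ) := mul_le_mul_of_nonneg_left h12 (by positivity)
      _ = 2 * (d : ℝ) / α := by ring
  have part2 : ∑ i ∈ Finset.univ.filter (fun i => ¬ w i = 1),
      ENNReal.ofReal (u i) ≤ ENNReal.ofReal ((d : ℝ) / α) := by
    rw [← ENNReal.ofReal_sum_of_nonneg (fun i _ => hu i)]
    exact ENNReal.ofReal_le_ofReal hiv
  calc ∑ i : Fin n, min (glev SA (A i)) (ENNReal.ofReal (u i))
      ≤ ∑ i : Fin n, (if w i = 1 then ENNReal.ofReal ((2/α) * lev M i)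
          else ENNReal.ofReal (u i)) := Finset.sum_le_sum (fun i _ => hmin i)
    _ = (∑ i ∈ Finset.univ.filter (fun i => w i = 1), ENNReal.ofReal ((2/α) * lev M i))
        + (∑ i ∈ Finset.univ.filter (fun i => ¬ w i = 1), ENNReal.ofReal (u i)) :=
        Finset.sum_ite _ _
    _ ≤ ENNReal.ofReal (2 * (d : ℝ) / α) + ENNReal.ofReal ((d : ℝ) / α) :=
        add_le_add part1 part2
    _ = ENNReal.ofReal (3 * (d : ℝ) / α) := by
        rw [← ENNReal.ofReal_add (by positivity) (by positivity)]
        congr 1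
        field_simp
        ring
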